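/- arXiv:1604.04417 — 2 statements merged into one kernel-verified Lean document; each statement's English description precedes it below -/
import Mathlib

section
/- Let A be a C*-algebra in which every element can be approximated in norm by finite linear combinations λ₁e₁ + ⋯ + λₙeₙ with real coefficients λᵢ and mutually orthogonal partial isometries e₁,…,eₙ (eᵢ eⱼ* = 0 and eⱼ* eᵢ = 0 for i ≠ j). If T : A → A is a bounded linear operator satisfying T(e) = 2{e,e,T(e)} + {e,T(e),e} for every partial isometry e in A, then T is a triple derivation. -/
set_option linter.unusedSectionVars false
set_option maxHeartbeats 1000000

variable {A : Type*} [NonUnitalNormedRing A] [StarRing A] [CStarRing A]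
  [NormedSpace ℂ A] [IsScalarTower ℂ A A] [SMulCommClass ℂ A A]
  [StarModule ℂ A] [CompleteSpace A]

/-- The triple product `{a,b,c} = (1/2)(a b* c + c b* a)` on a C*-algebra. -/
noncomputable def tp (a b c : A) : A :=
  (2⁻¹ : ℂ) • (a * star b * c + c * star b * a)

/-- A triple derivation: a (complex) linear map satisfying the triple Leibniz rule. -/
def IsTripleDerivation (δ : A → A) : Prop :=
  IsLinearMap ℂ δ ∧
    ∀ a b c : A, δ (tp a b c) = tp (δ a) b c + tp a (δ b) c + tp a b (δ c)

/-- A weak-local triple derivation: a linear map `T` such that for every continuous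
linear functional `φ` and every `a` there is a triple derivation `δ` with `φ (T a) = φ (δ a)`. -/
def IsWeakLocalTripleDerivation (T : A → A) : Prop :=
  IsLinearMap ℂ T ∧
    ∀ (φ : A →L[ℂ] ℂ) (a : A),
      ∃ δ : A → A, IsTripleDerivation δ ∧ φ (T a) = φ (δ a)

theorem tp_symm (a b c : A) : tp a b c = tp c b a := by simp [tp]; module
theorem tp_add₁ (a a' b c : A) : tp (a + a') b c = tp a b c + tp a' b c := by
  simp [tp, add_mul, mul_add]; module
theorem tp_add₂ (a b b' c : A) : tp a (b + b') c = tp a b c + tp a b' c := by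
  simp [tp, add_mul, mul_add]; module
theorem tp_add₃ (a b c c' : A) : tp a b (c + c') = tp a b c + tp a b c' := by
  simp [tp, add_mul, mul_add]; module
theorem tp_sub₁ (a a' b c : A) : tp (a - a') b c = tp a b c - tp a' b c := by
  simp [tp, sub_mul, mul_sub]; module
theorem tp_sub₂ (a b b' c : A) : tp a (b - b') c = tp a b c - tp a b' c := by
  simp [tp, sub_mul, mul_sub, star_sub]; module
theorem tp_sub₃ (a b c c' : A) : tp a b (c - c') = tp a b c - tp a b c' := by
  simp [tp, sub_mul, mul_sub]; module
theorem tp_smul₁ (s : ℂ) (a b c : A) : tp (s • a) b c = s • tp a b c := by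
  simp [tp, smul_mul_assoc, mul_smul_comm]; module
theorem tp_smul₃ (s : ℂ) (a b c : A) : tp a b (s • c) = s • tp a b c := by
  simp [tp, smul_mul_assoc, mul_smul_comm]; module
theorem tp_smul₂ (s : ℂ) (a b c : A) : tp a (s • b) c = (starRingEnd ℂ s) • tp a b c := by
  simp [tp, smul_mul_assoc, mul_smul_comm, star_smul, Complex.star_def]; module
theorem tp_orth₁ (a b c : A) (h1 : a * star b = 0) (h2 : star b * a = 0) : tp a b c = 0 := by
  simp [tp, h1, mul_assoc, h2]
theorem tp_orth₃ (a b c : A) (h1 : c * star b = 0) (h2 : star b * c = 0) : tp a b c = 0 := by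
  rw [tp_symm]; exact tp_orth₁ c b a h1 h2
theorem orth_swap {a b : A} (h : a * star b = 0) : b * star a = 0 := by
  have := congrArg star h; simpa [star_mul] using this
theorem orth_swap' {a b : A} (h : star b * a = 0) : star a * b = 0 := by
  have := congrArg star h; simpa [star_mul] using this

theorem tripotent_add {e f : A} (he : e * star e * e = e) (hf : f * star f * f = f)
    (h1 : e * star f = 0) (h2 : star f * e = 0) : (e + f) * star (e + f) * (e + f) = e + f := by
  have h3 : f * star e = 0 := orth_swap h1
  have h4 : star e * f = 0 := orth_swap' h2
  simp only [star_add, add_mul, mul_add, h1, h2, h3, h4, zero_mul, mul_zero, add_zero, zero_add]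
  rw [show e * star e * f = e * (star e * f) from mul_assoc ..,
      show f * star f * e = f * (star f * e) from mul_assoc ..,
      h4, h2, mul_zero, mul_zero]
  rw [he, hf]; abel

theorem tripotent_sub {e f : A} (he : e * star e * e = e) (hf : f * star f * f = f)
    (h1 : e * star f = 0) (h2 : star f * e = 0) : (e - f) * star (e - f) * (e - f) = e - f := by
  have hnf : (-f) * star (-f) * (-f) = -f := by simpa using congrArg Neg.neg hf
  have := tripotent_add he hnf (by simpa using h1) (by simpa using h2)
  simpa [sub_eq_add_neg] using this

theorem tripotent_smul_I {e : A} (he : e * star e * e = e) :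
    (Complex.I • e) * star (Complex.I • e) * (Complex.I • e) = Complex.I • e := by
  simp only [star_smul, Complex.star_def, Complex.conj_I, smul_mul_assoc, mul_smul_comm,
    neg_smul, smul_neg, neg_neg, mul_neg, neg_mul, smul_smul]
  rw [he]; match_scalars; simp [Complex.I_mul_I]

section T
variable (T : A →L[ℂ] A)
  (hT : ∀ e : A, e * star e * e = e → T e = (2 : ℂ) • tp e e (T e) + tp e (T e) e)

include hT in
theorem pairL {e f : A} (he : e * star e * e = e) (hf : f * star f * f = f)
    (h1 : e * star f = 0) (h2 : star f * e = 0) :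
    (2:ℂ) • tp f f (T e) + tp f (T e) f + (2:ℂ) • tp e (T f) f = 0 := by
  have h3 : f * star e = 0 := orth_swap h1
  have h4 : star e * f = 0 := orth_swap' h2
  have hp := hT (e + f) (tripotent_add he hf h1 h2)
  have hm := hT (e - f) (tripotent_sub he hf h1 h2)
  have hee := hT e he
  rw [map_add] at hp
  rw [map_sub] at hm
  have z1 : ∀ c, tp e f c = 0 := fun c => tp_orth₁ e f c h1 h2
  have z2 : ∀ c, tp f e c = 0 := fun c => tp_orth₁ f e c h3 h4
  have s1 : tp f (T e) e = tp e (T e) f := tp_symm ..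
  have s2 : tp f (T f) e = tp e (T f) f := tp_symm ..
  simp only [tp_add₁, tp_add₂, tp_add₃, tp_sub₁, tp_sub₂, tp_sub₃, z1, z2,
    add_zero, zero_add, sub_zero, zero_sub, s1, s2] at hp hm
  linear_combination (norm := module) hee - (2⁻¹:ℂ) • hp - (2⁻¹:ℂ) • hm

include hT in
theorem F1 {e f : A} (he : e * star e * e = e) (hf : f * star f * f = f)
    (h1 : e * star f = 0) (h2 : star f * e = 0) :
    tp f (T e) f = 0 := by
  have hA := pairL T hT he hf h1 h2
  have hB := pairL T hT (tripotent_smul_I he) hf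
    (by rw [smul_mul_assoc, h1, smul_zero])
    (by rw [mul_smul_comm, h2, smul_zero])
  simp only [map_smul, tp_smul₁, tp_smul₂, tp_smul₃, Complex.conj_I, neg_smul, smul_smul] at hB
  have key : (2 * Complex.I) • tp f (T e) f = 0 := by
    linear_combination (norm := module) Complex.I • hA - hB
  rcases smul_eq_zero.mp key with h | h
  · exact absurd h (by simp [Complex.I_ne_zero])
  · exact h

include hT in
theorem F2 {e f : A} (he : e * star e * e = e) (hf : f * star f * f = f)
    (h1 : e * star f = 0) (h2 : star f * e = 0) :
    tp f f (T e) + tp e (T f) f = 0 := by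
  have hA := pairL T hT he hf h1 h2
  have hc4 := F1 T hT he hf h1 h2
  have key : (2:ℂ) • (tp f f (T e) + tp e (T f) f) = 0 := by
    linear_combination (norm := module) hA - hc4
  rcases smul_eq_zero.mp key with h | h
  · norm_num at h
  · exact h

include hT in
theorem F1' {p q r : A} (hp : p * star p * p = p) (hq : q * star q * q = q)
    (hr : r * star r * r = r)
    (hpq1 : p * star q = 0) (hpq2 : star q * p = 0)
    (hpr1 : p * star r = 0) (hpr2 : star r * p = 0)
    (hqr1 : q * star r = 0) (hqr2 : star r * q = 0) :
    tp p (T r) q = 0 := by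
  have hsum : (p + q) * star (p + q) * (p + q) = p + q := tripotent_add hp hq hpq1 hpq2
  have o1 : r * star (p + q) = 0 := by
    rw [star_add, mul_add, orth_swap hpr1, orth_swap hqr1, add_zero]
  have o2 : star (p + q) * r = 0 := by
    rw [star_add, add_mul, orth_swap' hpr2, orth_swap' hqr2, add_zero]
  have h := F1 T hT hr hsum o1 o2
  rw [tp_add₁, tp_add₃, tp_add₃] at h
  rw [F1 T hT hr hp (orth_swap hpr1) (orth_swap' hpr2), F1 T hT hr hq (orth_swap hqr1) (orth_swap' hqr2)] at h
  have hsymm : tp q (T r) p = tp p (T r) q := tp_symm ..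
  have key : (2:ℂ) • tp p (T r) q = 0 := by
    linear_combination (norm := module) h - hsymm
  rcases smul_eq_zero.mp key with h | h
  · norm_num at h
  · exact h

end T

theorem tp_zero₁ (b c : A) : tp 0 b c = 0 := by simp [tp]

theorem tp_sum₁ {ι : Type*} (s : Finset ι) (g : ι → A) (b c : A) :
    tp (∑ i ∈ s, g i) b c = ∑ i ∈ s, tp (g i) b c := by
  classical
  induction s using Finset.induction with
  | empty => simp [tp]
  | insert _ _ h ih => simp [Finset.sum_insert h, tp_add₁, ih]

theorem tp_sum₂ {ι : Type*} (s : Finset ι) (g : ι → A) (a c : A) :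
    tp a (∑ i ∈ s, g i) c = ∑ i ∈ s, tp a (g i) c := by
  classical
  induction s using Finset.induction with
  | empty => simp [tp]
  | insert _ _ h ih => simp [Finset.sum_insert h, tp_add₂, ih]

theorem tp_sum₃ {ι : Type*} (s : Finset ι) (g : ι → A) (a b : A) :
    tp a b (∑ i ∈ s, g i) = ∑ i ∈ s, tp a b (g i) := by
  classical
  induction s using Finset.induction with
  | empty => simp [tp]
  | insert _ _ h ih => simp [Finset.sum_insert h, tp_add₃, ih]

theorem tp_fff {f : A} (hf : f * star f * f = f) : tp f f f = f := by
  rw [tp, hf, ← two_smul ℂ, smul_smul]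
  norm_num

theorem step (T : A →L[ℂ] A) {x f : A} (μ : ℝ)
    (hx : T (tp x x x) = tp (T x) x x + tp x (T x) x + tp x x (T x))
    (hf : f * star f * f = f)
    (hTf : T f = (2:ℂ) • tp f f (T f) + tp f (T f) f)
    (o1 : x * star f = 0) (o2 : star f * x = 0)
    (h4 : tp x (T f) x = 0)
    (h5 : tp x (T x) f + tp x x (T f) = 0)
    (h6 : tp x (T f) f + tp f f (T x) = 0)
    (h7 : tp f (T x) f = 0) :
    T (tp (x + (μ:ℂ) • f) (x + (μ:ℂ) • f) (x + (μ:ℂ) • f)) =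
      tp (T (x + (μ:ℂ) • f)) (x + (μ:ℂ) • f) (x + (μ:ℂ) • f)
      + tp (x + (μ:ℂ) • f) (T (x + (μ:ℂ) • f)) (x + (μ:ℂ) • f)
      + tp (x + (μ:ℂ) • f) (x + (μ:ℂ) • f) (T (x + (μ:ℂ) • f)) := by
  have o3 : f * star x = 0 := orth_swap o1
  have o4 : star x * f = 0 := orth_swap' o2
  have z1 : ∀ c, tp x f c = 0 := fun c => tp_orth₁ x f c o1 o2
  have z2 : ∀ c, tp f x c = 0 := fun c => tp_orth₁ f x c o3 o4
  have z3 : ∀ a, tp a f x = 0 := fun a => tp_orth₃ a f x o1 o2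
  have z4 : ∀ a, tp a x f = 0 := fun a => tp_orth₃ a x f o3 o4
  have hy3 : tp (x + (μ:ℂ) • f) (x + (μ:ℂ) • f) (x + (μ:ℂ) • f)
      = tp x x x + ((μ:ℂ)^3) • f := by
    simp only [tp_add₁, tp_add₂, tp_add₃, tp_smul₁, tp_smul₂, tp_smul₃,
      Complex.conj_ofReal, z1, z2, z3, z4, smul_zero, add_zero, zero_add, tp_fff hf]
    module
  rw [hy3, map_add, map_smul, hx]
  have s_a : tp (T f) x x = tp x x (T f) := tp_symm ..
  have s_b : tp f (T x) x = tp x (T x) f := tp_symm ..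
  have s_c : tp (T x) f f = tp f f (T x) := tp_symm ..
  have s_d : tp f (T f) x = tp x (T f) f := tp_symm ..
  have s_e : tp (T f) f f = tp f f (T f) := tp_symm ..
  simp only [map_add, map_smul, tp_add₁, tp_add₂, tp_add₃, tp_smul₁, tp_smul₂, tp_smul₃,
    Complex.conj_ofReal, z1, z2, z3, z4, smul_zero, add_zero, zero_add,
    s_a, s_b, s_c, s_d, s_e, h4, h7]
  linear_combination (norm := module)
    ((μ:ℂ)^3) • hTf - (2*(μ:ℂ)) • h5 - (2*((μ:ℂ)^2)) • h6

section Cubic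
variable (T : A →L[ℂ] A)
  (hT : ∀ e : A, e * star e * e = e → T e = (2 : ℂ) • tp e e (T e) + tp e (T e) e)

include hT in
theorem cubic : ∀ (n : ℕ) (lam : Fin n → ℝ) (e : Fin n → A),
    (∀ i, e i * star (e i) * e i = e i) →
    (∀ i j, i ≠ j → e i * star (e j) = 0 ∧ star (e j) * e i = 0) →
    T (tp (∑ i, (lam i : ℂ) • e i) (∑ i, (lam i : ℂ) • e i) (∑ i, (lam i : ℂ) • e i)) =
      tp (T (∑ i, (lam i : ℂ) • e i)) (∑ i, (lam i : ℂ) • e i) (∑ i, (lam i : ℂ) • e i)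
      + tp (∑ i, (lam i : ℂ) • e i) (T (∑ i, (lam i : ℂ) • e i)) (∑ i, (lam i : ℂ) • e i)
      + tp (∑ i, (lam i : ℂ) • e i) (∑ i, (lam i : ℂ) • e i) (T (∑ i, (lam i : ℂ) • e i)) := by
  intro n
  induction n with
  | zero =>
    intro lam e _ _
    simp [tp]
  | succ n ih =>
    intro lam e htri horth
    rw [Fin.sum_univ_castSucc]
    set f := e (Fin.last n) with hfdef
    set μ := lam (Fin.last n) with hμdef
    set x : A := ∑ i : Fin n, ((lam i.castSucc : ℝ) : ℂ) • e i.castSucc with hxdef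
    have hne : ∀ i : Fin n, i.castSucc ≠ Fin.last n := fun i => (Fin.castSucc_lt_last i).ne
    have hfe : f * star f * f = f := htri _
    have hx : T (tp x x x) = tp (T x) x x + tp x (T x) x + tp x x (T x) :=
      ih (fun i => lam i.castSucc) (fun i => e i.castSucc) (fun i => htri _)
        (fun i j hij => horth _ _ (fun h => hij (Fin.castSucc_injective _ h)))
    have o1 : x * star f = 0 := by
      rw [hxdef, Finset.sum_mul]
      refine Finset.sum_eq_zero fun i _ => ?_
      rw [smul_mul_assoc, (horth _ _ (hne i)).1, smul_zero]
    have o2 : star f * x = 0 := by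
      rw [hxdef, Finset.mul_sum]
      refine Finset.sum_eq_zero fun i _ => ?_
      rw [mul_smul_comm, (horth _ _ (hne i)).2, smul_zero]
    have hTx : T x = ∑ j : Fin n, ((lam j.castSucc : ℝ) : ℂ) • T (e j.castSucc) := by
      rw [hxdef, map_sum]
      exact Finset.sum_congr rfl fun j _ => map_smul T _ _
    -- orthogonality helpers for single tripotents
    have orth_if : ∀ i : Fin n, f * star (e i.castSucc) = 0 ∧ star (e i.castSucc) * f = 0 :=
      fun i => ⟨orth_swap (horth _ _ (hne i)).1, orth_swap' (horth _ _ (hne i)).2⟩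
    -- inner term lemmas
    have inner4 : ∀ i j : Fin n, tp (e i.castSucc) (T f) (e j.castSucc) = 0 := by
      intro i j
      by_cases hij : i = j
      · subst hij
        exact F1 T hT hfe (htri _) (orth_if i).1 (orth_if i).2
      · have hij' : i.castSucc ≠ j.castSucc := fun h => hij (Fin.castSucc_injective _ h)
        exact F1' T hT (htri i.castSucc) (htri j.castSucc) hfe
          (horth _ _ hij').1 (horth _ _ hij').2
          (horth _ _ (hne i)).1 (horth _ _ (hne i)).2
          (horth _ _ (hne j)).1 (horth _ _ (hne j)).2
    have inner5 : ∀ i j : Fin n,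
        tp (e i.castSucc) (T (e j.castSucc)) f + tp (e i.castSucc) (e j.castSucc) (T f) = 0 := by
      intro i j
      by_cases hij : i = j
      · subst hij
        have h2 := F2 T hT hfe (htri i.castSucc) (orth_if i).1 (orth_if i).2
        -- h2 : tp (e i) (e i) (T f) + tp f (T (e i)) (e i) = 0
        have hs : tp f (T (e i.castSucc)) (e i.castSucc)
            = tp (e i.castSucc) (T (e i.castSucc)) f := tp_symm ..
        rw [hs] at h2
        linear_combination (norm := module) h2
      · have hij' : i.castSucc ≠ j.castSucc := fun h => hij (Fin.castSucc_injective _ h)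
        have t1 : tp (e i.castSucc) (T (e j.castSucc)) f = 0 :=
          F1' T hT (htri i.castSucc) hfe (htri j.castSucc)
            (horth _ _ (hne i)).1 (horth _ _ (hne i)).2
            (horth _ _ hij').1 (horth _ _ hij').2
            (orth_if j).1 (orth_if j).2
        have t2 : tp (e i.castSucc) (e j.castSucc) (T f) = 0 :=
          tp_orth₁ _ _ _ (horth _ _ hij').1 (horth _ _ hij').2
        rw [t1, t2, add_zero]
    have h4 : tp x (T f) x = 0 := by
      rw [hxdef, tp_sum₁]
      refine Finset.sum_eq_zero fun i _ => ?_
      rw [tp_smul₁, tp_sum₃]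
      rw [show (∑ j : Fin n, tp (e i.castSucc) (T f) (((lam j.castSucc : ℝ) : ℂ) • e j.castSucc))
          = 0 from Finset.sum_eq_zero fun j _ => by rw [tp_smul₃, inner4 i j, smul_zero]]
      rw [smul_zero]
    have h5 : tp x (T x) f + tp x x (T f) = 0 := by
      have e1 : tp x (T x) f = ∑ i : Fin n, ∑ j : Fin n,
          (((lam i.castSucc : ℝ) : ℂ) * ((lam j.castSucc : ℝ) : ℂ)) •
            tp (e i.castSucc) (T (e j.castSucc)) f := by
        rw [hTx, hxdef, tp_sum₁]
        refine Finset.sum_congr rfl fun i _ => ?_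
        rw [tp_smul₁, tp_sum₂, Finset.smul_sum]
        refine Finset.sum_congr rfl fun j _ => ?_
        rw [tp_smul₂, Complex.conj_ofReal, smul_smul]
      have e2 : tp x x (T f) = ∑ i : Fin n, ∑ j : Fin n,
          (((lam i.castSucc : ℝ) : ℂ) * ((lam j.castSucc : ℝ) : ℂ)) •
            tp (e i.castSucc) (e j.castSucc) (T f) := by
        rw [hxdef, tp_sum₁]
        refine Finset.sum_congr rfl fun i _ => ?_
        rw [tp_smul₁, tp_sum₂, Finset.smul_sum]
        refine Finset.sum_congr rfl fun j _ => ?_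
        rw [tp_smul₂, Complex.conj_ofReal, smul_smul]
      rw [e1, e2, ← Finset.sum_add_distrib]
      refine Finset.sum_eq_zero fun i _ => ?_
      rw [← Finset.sum_add_distrib]
      refine Finset.sum_eq_zero fun j _ => ?_
      rw [← smul_add, inner5 i j, smul_zero]
    have h6 : tp x (T f) f + tp f f (T x) = 0 := by
      have e1 : tp x (T f) f = ∑ i : Fin n,
          ((lam i.castSucc : ℝ) : ℂ) • tp (e i.castSucc) (T f) f := by
        rw [hxdef, tp_sum₁]
        exact Finset.sum_congr rfl fun i _ => tp_smul₁ ..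
      have e2 : tp f f (T x) = ∑ i : Fin n,
          ((lam i.castSucc : ℝ) : ℂ) • tp f f (T (e i.castSucc)) := by
        rw [hTx, tp_sum₃]
        exact Finset.sum_congr rfl fun i _ => tp_smul₃ ..
      rw [e1, e2, ← Finset.sum_add_distrib]
      refine Finset.sum_eq_zero fun i _ => ?_
      rw [← smul_add]
      have h2 := F2 T hT (htri i.castSucc) hfe (horth _ _ (hne i)).1 (horth _ _ (hne i)).2
      -- h2 : tp f f (T (e i)) + tp (e i) (T f) f = 0
      rw [add_comm] at h2
      rw [h2, smul_zero]
    have h7 : tp f (T x) f = 0 := by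
      rw [hTx, tp_sum₂]
      refine Finset.sum_eq_zero fun j _ => ?_
      rw [tp_smul₂, Complex.conj_ofReal, F1 T hT (htri j.castSucc) hfe
        (horth _ _ (hne j)).1 (horth _ _ (hne j)).2, smul_zero]
    exact step T μ hx hfe (hT f hfe) o1 o2 h4 h5 h6 h7

end Cubic


noncomputable def Dd (T : A →L[ℂ] A) (a b c : A) : A :=
  T (tp a b c) - tp (T a) b c - tp a (T b) c - tp a b (T c)

theorem Dd_symm (T : A →L[ℂ] A) (a b c : A) : Dd T a b c = Dd T c b a := by
  unfold Dd
  rw [tp_symm a b c, tp_symm (T a) b c, tp_symm a (T b) c, tp_symm a b (T c)]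
  abel

theorem Dd_add₁ (T : A →L[ℂ] A) (a a' b c : A) :
    Dd T (a + a') b c = Dd T a b c + Dd T a' b c := by
  simp only [Dd, tp_add₁, map_add]; abel

theorem Dd_add₂ (T : A →L[ℂ] A) (a b b' c : A) :
    Dd T a (b + b') c = Dd T a b c + Dd T a b' c := by
  simp only [Dd, tp_add₂, map_add]; abel

theorem Dd_add₃ (T : A →L[ℂ] A) (a b c c' : A) :
    Dd T a b (c + c') = Dd T a b c + Dd T a b c' := by
  simp only [Dd, tp_add₃, map_add]; abel

theorem Dd_smul₁ (T : A →L[ℂ] A) (s : ℂ) (a b c : A) :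
    Dd T (s • a) b c = s • Dd T a b c := by
  simp only [Dd, tp_smul₁, map_smul, smul_sub]

theorem Dd_smul₂ (T : A →L[ℂ] A) (s : ℂ) (a b c : A) :
    Dd T a (s • b) c = (starRingEnd ℂ s) • Dd T a b c := by
  simp only [Dd, tp_smul₂, map_smul, smul_sub]

theorem Dd_smul₃ (T : A →L[ℂ] A) (s : ℂ) (a b c : A) :
    Dd T a b (s • c) = s • Dd T a b c := by
  simp only [Dd, tp_smul₃, map_smul, smul_sub]

theorem Dd_neg₁ (T : A →L[ℂ] A) (a b c : A) : Dd T (-a) b c = - Dd T a b c := by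
  have := Dd_smul₁ T (-1) a b c; simpa using this

theorem Dd_neg₂ (T : A →L[ℂ] A) (a b c : A) : Dd T a (-b) c = - Dd T a b c := by
  have := Dd_smul₂ T (-1) a b c; simpa using this

theorem Dd_neg₃ (T : A →L[ℂ] A) (a b c : A) : Dd T a b (-c) = - Dd T a b c := by
  have := Dd_smul₃ T (-1) a b c; simpa using this

theorem Dd_cont (T : A →L[ℂ] A) : Continuous (fun x : A => Dd T x x x) := by
  simp only [Dd, tp]
  fun_prop

/-- polarization: if the diagonal vanishes, Dd vanishes. -/
theorem Dd_polarization (T : A →L[ℂ] A) (hdiag : ∀ a : A, Dd T a a a = 0) :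
    ∀ a b c : A, Dd T a b c = 0 := by
  have key1 : ∀ a b : A, Dd T b a a + Dd T a b a + Dd T a a b = 0 := by
    intro a b
    have hp := hdiag (a + b)
    have hm := hdiag (a + -b)
    simp only [Dd_add₁, Dd_add₂, Dd_add₃, Dd_neg₁, Dd_neg₂, Dd_neg₃] at hp hm
    linear_combination (norm := module) (2⁻¹:ℂ) • hp - (2⁻¹:ℂ) • hm - hdiag b
  have key2 : ∀ a b : A, Dd T a b a = 0 := by
    intro a b
    have h1 := key1 a b
    have h2 := key1 (Complex.I • a) b
    simp only [Dd_smul₁, Dd_smul₂, Dd_smul₃, Complex.conj_I, smul_smul, neg_smul, smul_neg,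
      neg_mul, mul_neg, Complex.I_mul_I, neg_neg, one_smul] at h2
    have key : (2:ℂ) • Dd T a b a = 0 := by
      linear_combination (norm := module) h1 - h2
    rcases smul_eq_zero.mp key with h | h
    · norm_num at h
    · exact h
  intro a b c
  have h := key2 (a + c) b
  rw [Dd_add₁, Dd_add₃, Dd_add₃] at h
  rw [key2 a b, key2 c b, zero_add, add_zero] at h
  have hs : Dd T c b a = Dd T a b c := Dd_symm ..
  have key : (2:ℂ) • Dd T a b c = 0 := by
    linear_combination (norm := module) h - hs
  rcases smul_eq_zero.mp key with h | h
  · norm_num at h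
  · exact h

/-- If in a C*-algebra `A` every element is a norm-limit of real linear combinations of
mutually orthogonal partial isometries, then every bounded linear operator `T` with
`T e = 2{e,e,T e} + {e,T e,e}` for all partial isometries `e` is a triple derivation. -/
theorem stmt10
    (happrox : ∀ (x : A) (ε : ℝ), 0 < ε →
      ∃ (n : ℕ) (lam : Fin n → ℝ) (e : Fin n → A),
        (∀ i, e i * star (e i) * e i = e i) ∧
        (∀ i j, i ≠ j → e i * star (e j) = 0 ∧ star (e j) * e i = 0) ∧
        ‖x - ∑ i, (lam i : ℂ) • e i‖ < ε)
    (T : A →L[ℂ] A)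
    (hT : ∀ e : A, e * star e * e = e →
      T e = (2 : ℂ) • tp e e (T e) + tp e (T e) e) :
    IsTripleDerivation (⇑T) := by
  constructor
  · exact ⟨fun x y => map_add T x y, fun c x => map_smul T c x⟩
  · have hdiag : ∀ a : A, Dd T a a a = 0 := by
      have hS : Dense {x : A | ∃ (n : ℕ) (lam : Fin n → ℝ) (e : Fin n → A),
          (∀ i, e i * star (e i) * e i = e i) ∧
          (∀ i j, i ≠ j → e i * star (e j) = 0 ∧ star (e j) * e i = 0) ∧
          x = ∑ i, (lam i : ℂ) • e i} := by
        rw [Metric.dense_iff]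
        intro x r hr
        obtain ⟨n, lam, e, h1, h2, h3⟩ := happrox x r hr
        exact ⟨∑ i, (lam i : ℂ) • e i,
          ⟨by rw [Metric.mem_ball, dist_eq_norm]; simpa [norm_sub_rev] using h3,
           n, lam, e, h1, h2, rfl⟩⟩
      have hEq : (fun x : A => Dd T x x x) = fun _ => 0 :=
        Continuous.ext_on hS (Dd_cont T) continuous_const (fun x hx => by
          obtain ⟨n, lam, e, h1, h2, rfl⟩ := hx
          have hc := cubic T hT n lam e h1 h2
          show Dd T _ _ _ = 0
          rw [Dd, hc]
          abel)
      exact fun a => congrFun hEq a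
    intro a b c
    have h := Dd_polarization T hdiag a b c
    rw [Dd] at h
    linear_combination (norm := module) h
end

section
/- Let T be a weak-local triple derivation on a C*-algebra A, let e be a partial isometry in A, and let a ∈ A satisfy e e* a e* e = a. Then P₀(e)(T(a)) = 0, i.e., T(a) − e e* T(a) − T(a) e* e + e e* T(a) e* e = 0. -/
variable {A : Type*} [NonUnitalNormedRing A] [StarRing A] [CStarRing A]
  [NormedSpace ℂ A] [IsScalarTower ℂ A A] [SMulCommClass ℂ A A]
  [StarModule ℂ A] [CompleteSpace A]

/-- The Peirce-0 projection as a continuous linear map. -/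
noncomputable def P0 (e : A) : A →L[ℂ] A :=
  ContinuousLinearMap.id ℂ A - ContinuousLinearMap.mul ℂ A (e * star e)
    - (ContinuousLinearMap.mul ℂ A).flip (star e * e)
    + (ContinuousLinearMap.mul ℂ A (e * star e)).comp
        ((ContinuousLinearMap.mul ℂ A).flip (star e * e))

lemma P0_apply (e x : A) :
    P0 e x = x - e * star e * x - x * star e * e + e * star e * x * star e * e := by
  simp [P0, mul_assoc]

lemma P0_mul_e (e : A) (he : e * star e * e = e) (c : A) : P0 e (c * e) = 0 := by
  have h : ∀ d : A, d * e * star e * e = d * e := by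
    intro d
    rw [mul_assoc d e (star e), mul_assoc d (e * star e) e, he]
  rw [P0_apply]
  have h2 : e * star e * (c * e) = (e * star e * c) * e := by simp [mul_assoc]
  rw [h c, h2, h (e * star e * c), ← h2]
  abel

lemma e_mul_P0 (e : A) (he : e * star e * e = e) (c : A) : P0 e (e * c) = 0 := by
  have h1 : e * star e * (e * c) = e * c := by rw [← mul_assoc, he]
  rw [P0_apply, h1]
  abel

lemma P0_tp_right (e : A) (he : e * star e * e = e) (x y : A) : P0 e (tp x y e) = 0 := by
  have h1 : tp x y e = (2⁻¹ : ℂ) • ((x * star y) * e + e * (star y * x)) := by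
    simp [tp, mul_assoc]
  rw [h1, map_smul, map_add, P0_mul_e e he, e_mul_P0 e he, add_zero, smul_zero]

lemma P0_tp_left (e : A) (he : e * star e * e = e) (y z : A) : P0 e (tp e y z) = 0 := by
  have h1 : tp e y z = (2⁻¹ : ℂ) • (e * (star y * z) + (z * star y) * e) := by
    simp [tp, mul_assoc]
  rw [h1, map_smul, map_add, P0_mul_e e he, e_mul_P0 e he, add_zero, smul_zero]

lemma P0_td (e a : A) (he : e * star e * e = e) (ha : e * star e * a * star e * e = a)
    (δ : A → A) (hδ : IsTripleDerivation δ) : P0 e (δ a) = 0 := by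
  have hb : tp e (e * star a * e) e = a := by
    simp only [tp, star_mul, star_star]
    rw [← two_smul ℂ, ← smul_assoc]
    norm_num
    conv_rhs => rw [← ha]
    simp [mul_assoc]
  rw [← hb, hδ.2, map_add, map_add, P0_tp_right e he, P0_tp_right e he, P0_tp_left e he]
  simp

/-- For a weak-local triple derivation `T`, a partial isometry `e`, and `a` with
`e e* a e* e = a`, we have `P₀(e)(T a) = 0`. -/
theorem stmt13 (T : A → A) (hT : IsWeakLocalTripleDerivation T) (e a : A)
    (he : e * star e * e = e) (ha : e * star e * a * star e * e = a) :
    T a - e * star e * T a - T a * star e * e + e * star e * T a * star e * e = 0 := by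
  have key : P0 e (T a) = 0 := by
    apply NormedSpace.eq_zero_of_forall_dual_eq_zero ℂ
    intro φ
    obtain ⟨δ, hδ, hφ⟩ := hT.2 (φ.comp (P0 e)) a
    simp only [ContinuousLinearMap.comp_apply] at hφ
    rw [hφ, P0_td e a he ha δ hδ, map_zero]
  rw [← P0_apply]
  exact key
end
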